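/- Let Σ be a (restricted) root system with positive system Σ⁺ and simple roots Π, W its Weyl group. Let Θ ⊂ Π and Σ_M⁺ = ℤΘ ∩ Σ⁺, with W(M) = {w ∈ W : w(Σ_M⁺) ⊂ Σ⁺}. Let η-support be a subset S ⊂ Π with Σ_η⁺ = ℤS ∩ Σ⁺. Then #{w ∈ W(S, Θ)} = #{w ∈ W(M) : w(Σ⁺) ∩ Σ_η⁺ = ∅}, where W(S,Θ) = {w ∈ W(S) ∩ W(Θ)^{-1} : w(Σ_S) ∩ Σ_Θ = ∅}, W(Θ') = {w ∈ W : w(Θ') ⊂ Σ⁺}, and Σ_{Θ'} = ℤΘ' ∩ Σ. -/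

import Mathlib

/-! Abstract (possibly non-reduced, crystallographic) root system in a finite-dimensional
real inner product space, with a positive system and simple roots; the Weyl group is the
subgroup of linear isometries generated by the reflections in the roots. -/

noncomputable def rootRefl {V : Type*} [NormedAddCommGroup V] [InnerProductSpace ℝ V]
    [FiniteDimensional ℝ V] (α : V) : V ≃ₗᵢ[ℝ] V :=
  Submodule.reflection (Submodule.span ℝ {α})ᗮ

set_option linter.unusedSectionVars false
set_option maxHeartbeats 1000000
open Submodule

section Aux
variable {V : Type*} [NormedAddCommGroup V] [InnerProductSpace ℝ V] [FiniteDimensional ℝ V]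

lemma rootRefl_apply_self (α : V) : rootRefl α α = -α :=
  reflection_mem_subspace_orthogonalComplement_eq_neg
    (by rw [Submodule.orthogonal_orthogonal]; exact Submodule.mem_span_singleton_self α)

lemma rootRefl_invol (α x : V) : rootRefl α (rootRefl α x) = x :=
  reflection_reflection _ x

lemma rootRefl_inv (α : V) : (rootRefl α)⁻¹ = rootRefl α := by
  ext x
  rw [LinearIsometryEquiv.coe_inv, rootRefl, reflection_symm]

lemma rootRefl_sub_mem (α x : V) : rootRefl α x - x ∈ Submodule.span ℝ {α} := by
  have h := sub_starProjection_mem_orthogonal (K := (Submodule.span ℝ {α})ᗮ) x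
  rw [Submodule.orthogonal_orthogonal] at h
  have he : rootRefl α x - x
      = (-2 : ℝ) • (x - ((Submodule.span ℝ {α})ᗮ.starProjection x : V)) := by
    rw [rootRefl, reflection_apply]
    module
  rw [he]
  exact Submodule.smul_mem _ _ h

end Aux

structure RootSystemData (V : Type*) [NormedAddCommGroup V] [InnerProductSpace ℝ V]
    [FiniteDimensional ℝ V] where
  /-- the set of roots -/
  roots : Set V
  /-- the positive system -/
  pos : Set V
  /-- the simple roots determined by the positive system -/
  simple : Set V
  finite : roots.Finite
  ne_zero : ∀ α ∈ roots, α ≠ (0 : V)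
  refl_stable : ∀ α ∈ roots, ∀ β ∈ roots, rootRefl α β ∈ roots
  crystallographic : ∀ α ∈ roots, ∀ β ∈ roots,
    ∃ n : ℤ, 2 * (inner ℝ β α : ℝ) / (inner ℝ α α : ℝ) = (n : ℝ)
  pos_subset : pos ⊆ roots
  pos_union : roots = pos ∪ (-pos)
  pos_disjoint : Disjoint pos (-pos)
  simple_subset : simple ⊆ pos
  simple_indep : LinearIndependent ℝ ((↑) : simple → V)
  pos_natSpan : ∀ α ∈ pos, ∃ f : V →₀ ℕ,
    (f.support : Set V) ⊆ simple ∧ α = f.sum fun β n => (n : ℝ) • β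

/-- The Weyl group: the subgroup of isometries generated by all root reflections. -/
noncomputable def RootSystemData.weyl {V : Type*} [NormedAddCommGroup V]
    [InnerProductSpace ℝ V] [FiniteDimensional ℝ V] (R : RootSystemData V) :
    Subgroup (V ≃ₗᵢ[ℝ] V) :=
  Subgroup.closure {w | ∃ α ∈ R.roots, w = rootRefl α}

section Aux2
variable {V : Type*} [NormedAddCommGroup V] [InnerProductSpace ℝ V] [FiniteDimensional ℝ V]

namespace RootSystemData
variable (R : RootSystemData V)


lemma rootRefl_int {α β : V} (hα : α ∈ R.roots) (hβ : β ∈ R.roots) :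
    ∃ n : ℤ, rootRefl α β = β + (n : ℝ) • α := by
  obtain ⟨c, hc⟩ := mem_span_singleton.mp (rootRefl_sub_mem α β)
  obtain ⟨n, hn⟩ := R.crystallographic α hα β hβ
  have hαα : (inner ℝ α α : ℝ) ≠ 0 := inner_self_ne_zero.mpr (R.ne_zero α hα)
  have hiso : (inner ℝ α (rootRefl α β) : ℝ) = - inner ℝ α β := by
    have h := (rootRefl α).inner_map_map α β
    rw [rootRefl_apply_self, inner_neg_left] at h
    linarith
  have hc' : (inner ℝ α (rootRefl α β) : ℝ) = inner ℝ α β + c * inner ℝ α α := by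
    have h := congrArg (fun x : V => (inner ℝ α x : ℝ)) hc
    simp only [inner_sub_right, real_inner_smul_right] at h
    linarith
  have hn' : 2 * (inner ℝ α β : ℝ) = n * inner ℝ α α := by
    rw [real_inner_comm α β] at hn
    field_simp at hn
    linarith
  have hcn : c = -n := by
    have h1 : c * (inner ℝ α α : ℝ) = (-n : ℝ) * inner ℝ α α := by
      rw [hiso] at hc'; nlinarith
    exact_mod_cast mul_right_cancel₀ hαα h1
  refine ⟨-n, ?_⟩
  have h2 : rootRefl α β = c • α + β := sub_eq_iff_eq_add.mp hc.symm
  rw [h2, hcn]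
  push_cast
  module

open Classical in
/-- coordinate functional w.r.t. the extension of the simple roots to a basis -/
noncomputable def coord (θ : V) : V →ₗ[ℝ] ℝ :=
  if h : θ ∈ (R.simple_indep.linearIndepOn_id' Subtype.range_coe).extend (Set.subset_univ R.simple) then
    (Module.Basis.extend (R.simple_indep.linearIndepOn_id' Subtype.range_coe)).coord ⟨θ, h⟩ else 0

open Classical in
lemma coord_apply_basis {θ θ' : V} (hθ : θ ∈ R.simple) (hθ' : θ' ∈ R.simple) :
    R.coord θ θ' = if θ' = θ then 1 else 0 := by
  have h1 : θ ∈ (R.simple_indep.linearIndepOn_id' Subtype.range_coe).extend (Set.subset_univ R.simple) :=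
    (R.simple_indep.linearIndepOn_id' Subtype.range_coe).subset_extend _ hθ
  have h2 : θ' ∈ (R.simple_indep.linearIndepOn_id' Subtype.range_coe).extend (Set.subset_univ R.simple) :=
    (R.simple_indep.linearIndepOn_id' Subtype.range_coe).subset_extend _ hθ'
  rw [coord, dif_pos h1]
  have he : θ' = (Module.Basis.extend (R.simple_indep.linearIndepOn_id' Subtype.range_coe)) ⟨θ', h2⟩ := (Module.Basis.extend_apply_self (R.simple_indep.linearIndepOn_id' Subtype.range_coe) ⟨θ', h2⟩).symm
  rw [Module.Basis.coord_apply, he, Module.Basis.repr_self, Finsupp.single_apply]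
  simp [Subtype.ext_iff]

lemma coord_zero_of_span {θ : V} (hθ : θ ∈ R.simple) {X : Set V} (hX : X ⊆ R.simple)
    (hθX : θ ∉ X) {x : V} (hx : x ∈ span ℝ X) : R.coord θ x = 0 := by
  have hker : span ℝ X ≤ LinearMap.ker (R.coord θ) := by
    rw [span_le]
    intro y hy
    have hy0 : R.coord θ y = 0 := by
      rw [R.coord_apply_basis hθ (hX hy), if_neg]
      rintro rfl; exact hθX hy
    simpa [LinearMap.mem_ker] using hy0
  simpa [LinearMap.mem_ker] using hker hx

lemma mem_rspan_of_zspan {X : Set V} {x : V} (hx : x ∈ span ℤ X) :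
    x ∈ span ℝ X := by
  have h : span ℤ X ≤ (span ℝ X).restrictScalars ℤ :=
    span_le.mpr (fun y hy => subset_span hy)
  exact h hx

lemma pos_repr {α : V} (hα : α ∈ R.pos) : ∃ f : V →₀ ℕ,
    (f.support : Set V) ⊆ R.simple ∧ (α = f.sum fun β n => (n : ℝ) • β) ∧
    ∀ θ ∈ R.simple, R.coord θ α = f θ := by
  obtain ⟨f, hsupp, hsum⟩ := R.pos_natSpan α hα
  refine ⟨f, hsupp, hsum, fun θ hθ => ?_⟩
  rw [hsum, map_finsuppSum, Finsupp.sum_eq_single θ]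
  · rw [map_smul, smul_eq_mul]
    rcases eq_or_ne (f θ) 0 with h | h
    · simp [h]
    · have : θ ∈ R.simple := hsupp (Finsupp.mem_support_iff.mpr h)
      rw [R.coord_apply_basis hθ this, if_pos rfl, mul_one]
  · intro β hβ hne
    rw [map_smul, smul_eq_mul,
      R.coord_apply_basis hθ (hsupp (Finsupp.mem_support_iff.mpr hβ)), if_neg hne, mul_zero]
  · simp

lemma coord_nonneg {α : V} (hα : α ∈ R.pos) {θ : V} (hθ : θ ∈ R.simple) :
    0 ≤ R.coord θ α := by
  obtain ⟨f, _, _, hc⟩ := R.pos_repr hα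
  rw [hc θ hθ]
  positivity

lemma exists_coord_pos {α : V} (hα : α ∈ R.pos) :
    ∃ θ ∈ R.simple, 0 < R.coord θ α := by
  obtain ⟨f, hsupp, hsum, hc⟩ := R.pos_repr hα
  have hne : α ≠ 0 := R.ne_zero α (R.pos_subset hα)
  have : f.support.Nonempty := by
    rcases Finset.eq_empty_or_nonempty f.support with h | h
    · exfalso; apply hne; rw [hsum, Finsupp.sum, h, Finset.sum_empty]
    · exact h
  obtain ⟨θ, hθ⟩ := this
  have hθs : θ ∈ R.simple := hsupp hθ
  refine ⟨θ, hθs, ?_⟩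
  rw [hc θ hθs]
  exact_mod_cast Nat.pos_of_ne_zero (Finsupp.mem_support_iff.mp hθ)

lemma neg_mem_roots {α : V} (hα : α ∈ R.roots) : -α ∈ R.roots := by
  rw [R.pos_union] at hα ⊢
  rcases hα with h | h
  · exact Or.inr (by simpa using h)
  · exact Or.inl (by simpa using h)

lemma neg_mem_pos {α : V} (hα : α ∈ R.roots) (h : α ∉ R.pos) : -α ∈ R.pos := by
  rw [R.pos_union] at hα
  rcases hα with h' | h'
  · exact absurd h' h
  · simpa using h'

lemma not_neg_mem_pos {α : V} (hα : α ∈ R.pos) : -α ∉ R.pos := fun h =>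
  Set.disjoint_left.mp R.pos_disjoint hα (by simpa using h)

lemma mem_pos_of_coord_nonneg {α : V} (hα : α ∈ R.roots)
    (h : ∀ θ ∈ R.simple, 0 ≤ R.coord θ α) : α ∈ R.pos := by
  by_contra hn
  obtain ⟨θ, hθ, hpos⟩ := R.exists_coord_pos (R.neg_mem_pos hα hn)
  rw [map_neg] at hpos
  linarith [h θ hθ]

lemma mem_pos_of_coord_pos {α : V} (hα : α ∈ R.roots) {θ : V} (hθ : θ ∈ R.simple)
    (h : 0 < R.coord θ α) : α ∈ R.pos := by
  by_contra hn
  have := R.coord_nonneg (R.neg_mem_pos hα hn) hθ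
  rw [map_neg] at this
  linarith

lemma mem_zspan_of_coord {α : V} (hα : α ∈ R.pos) {X : Set V} (hX : X ⊆ R.simple)
    (h : ∀ θ ∈ R.simple, θ ∉ X → R.coord θ α = 0) : α ∈ span ℤ X := by
  obtain ⟨f, hsupp, hsum, hc⟩ := R.pos_repr hα
  have hsX : (f.support : Set V) ⊆ X := by
    intro β hβ
    have hβs : β ∈ R.simple := hsupp hβ
    by_contra hβX
    have h0 : R.coord β α = 0 := h β hβs hβX
    rw [hc β hβs] at h0
    exact Finsupp.mem_support_iff.mp (by exact_mod_cast hβ) (by exact_mod_cast h0)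
  rw [hsum, Finsupp.sum]
  refine Submodule.sum_mem _ (fun β hβ => ?_)
  have : ((f β : ℕ) : ℝ) • β = ((f β : ℤ)) • β := by
    rw [Nat.cast_smul_eq_nsmul, natCast_zsmul]
  rw [this]
  exact Submodule.smul_mem _ _ (subset_span (hsX hβ))

lemma exists_coord_pos_off {α : V} (hα : α ∈ R.pos) {X : Set V} (hX : X ⊆ R.simple)
    (h : α ∉ span ℤ X) : ∃ θ ∈ R.simple, θ ∉ X ∧ 0 < R.coord θ α := by
  by_contra hcon
  push_neg at hcon
  exact h (R.mem_zspan_of_coord hα hX (fun θ hθ hθX =>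
    le_antisymm (hcon θ hθ hθX) (R.coord_nonneg hα hθ)))

end RootSystemData

/-- the subgroup generated by reflections in elements of `S` -/
noncomputable def RootSystemData.WS {V : Type*} [NormedAddCommGroup V]
    [InnerProductSpace ℝ V] [FiniteDimensional ℝ V] (R : RootSystemData V) (S : Set V) :
    Subgroup (V ≃ₗᵢ[ℝ] V) :=
  Subgroup.closure {w | ∃ α ∈ S, w = rootRefl α}

namespace RootSystemData
variable (R : RootSystemData V)

lemma weyl_roots {w : V ≃ₗᵢ[ℝ] V} (hw : w ∈ R.weyl) :
    ∀ α ∈ R.roots, w α ∈ R.roots ∧ w⁻¹ α ∈ R.roots := by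
  refine Subgroup.closure_induction
    (p := fun g _ => ∀ α ∈ R.roots, g α ∈ R.roots ∧ g⁻¹ α ∈ R.roots) ?_ ?_ ?_ ?_ hw
  · rintro x ⟨α₀, hα₀, rfl⟩ α hα
    rw [rootRefl_inv]
    exact ⟨R.refl_stable α₀ hα₀ α hα, R.refl_stable α₀ hα₀ α hα⟩
  · intro α hα
    rw [inv_one]
    simp only [LinearIsometryEquiv.coe_one, id_eq]
    exact ⟨hα, hα⟩
  · intro x y _ _ hx hy α hα
    constructor
    · rw [LinearIsometryEquiv.coe_mul, Function.comp_apply]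
      exact (hx _ (hy α hα).1).1
    · rw [mul_inv_rev, LinearIsometryEquiv.coe_mul, Function.comp_apply]
      exact (hy _ (hx α hα).2).2
  · intro x _ hx α hα
    refine ⟨(hx α hα).2, ?_⟩
    rw [inv_inv]
    exact (hx α hα).1

variable {S : Set V}

lemma WS_le_weyl (hS : S ⊆ R.simple) : R.WS S ≤ R.weyl := by
  rw [WS, Subgroup.closure_le]
  rintro x ⟨α, hα, rfl⟩
  exact Subgroup.subset_closure ⟨α, R.pos_subset (R.simple_subset (hS hα)), rfl⟩

lemma ws_span {w : V ≃ₗᵢ[ℝ] V} (hw : w ∈ R.WS S) (x : V) :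
    w x - x ∈ span ℝ S := by
  revert x
  refine Subgroup.closure_induction
    (p := fun g _ => ∀ x : V, g x - x ∈ span ℝ S) ?_ ?_ ?_ ?_ hw
  · rintro g ⟨α, hα, rfl⟩ x
    refine span_mono (by simpa using hα) (rootRefl_sub_mem α x)
  · intro x; simpa using Submodule.zero_mem _
  · intro a b _ _ ha hb x
    have h : (a * b) x - x = (a (b x) - b x) + (b x - x) := by
      rw [LinearIsometryEquiv.coe_mul, Function.comp_apply]; abel
    rw [h]
    exact Submodule.add_mem _ (ha (b x)) (hb x)
  · intro a _ ha x
    have h : a⁻¹ x - x = -(a (a⁻¹ x) - a⁻¹ x) := by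
      have : a (a⁻¹ x) = x := by
        rw [LinearIsometryEquiv.coe_inv]; exact a.apply_symm_apply x
      rw [this]; abel
    rw [h]
    exact Submodule.neg_mem _ (ha (a⁻¹ x))

lemma ws_stab (hS : S ⊆ R.simple) {w : V ≃ₗᵢ[ℝ] V} (hw : w ∈ R.WS S) :
    ∀ α, α ∈ R.roots → α ∈ span ℤ S →
      (w α ∈ R.roots ∧ w α ∈ span ℤ S) ∧ (w⁻¹ α ∈ R.roots ∧ w⁻¹ α ∈ span ℤ S) := by
  refine Subgroup.closure_induction
    (p := fun g _ => ∀ α, α ∈ R.roots → α ∈ span ℤ S →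
      (g α ∈ R.roots ∧ g α ∈ span ℤ S) ∧ (g⁻¹ α ∈ R.roots ∧ g⁻¹ α ∈ span ℤ S)) ?_ ?_ ?_ ?_ hw
  · rintro g ⟨α₀, hα₀, rfl⟩ α hα hαs
    have hα₀r : α₀ ∈ R.roots := R.pos_subset (R.simple_subset (hS hα₀))
    have hroot : rootRefl α₀ α ∈ R.roots := R.refl_stable α₀ hα₀r α hα
    have hspan : rootRefl α₀ α ∈ span ℤ S := by
      obtain ⟨n, hn⟩ := R.rootRefl_int hα₀r hα
      rw [hn, Int.cast_smul_eq_zsmul]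
      exact Submodule.add_mem _ hαs (Submodule.smul_mem _ _ (subset_span hα₀))
    rw [rootRefl_inv]
    exact ⟨⟨hroot, hspan⟩, hroot, hspan⟩
  · intro α hα hαs
    rw [inv_one]
    simp only [LinearIsometryEquiv.coe_one, id_eq]
    exact ⟨⟨hα, hαs⟩, hα, hαs⟩
  · intro a b _ _ ha hb α hα hαs
    constructor
    · rw [LinearIsometryEquiv.coe_mul, Function.comp_apply]
      exact (ha _ ((hb α hα hαs).1).1 ((hb α hα hαs).1).2).1
    · rw [mul_inv_rev, LinearIsometryEquiv.coe_mul, Function.comp_apply]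
      exact (hb _ ((ha α hα hαs).2).1 ((ha α hα hαs).2).2).2
  · intro a _ ha α hα hαs
    refine ⟨(ha α hα hαs).2, ?_⟩
    rw [inv_inv]
    exact (ha α hα hαs).1

/-- an element of `WS` sends a positive root outside `ℤS` to a positive root -/
lemma ws_pos_out (hS : S ⊆ R.simple) {w : V ≃ₗᵢ[ℝ] V} (hw : w ∈ R.WS S) {β : V} (hβ : β ∈ R.pos)
    (hout : β ∉ span ℤ S) : w β ∈ R.pos := by
  obtain ⟨θ, hθ, hθS, hθpos⟩ := R.exists_coord_pos_off hβ hS hout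
  have hroot : w β ∈ R.roots :=
    (R.weyl_roots (R.WS_le_weyl hS hw) β (R.pos_subset hβ)).1
  have hcoord : R.coord θ (w β) = R.coord θ β := by
    have h1 : R.coord θ (w β - β) = 0 :=
      R.coord_zero_of_span hθ hS hθS (R.ws_span hw β)
    rw [map_sub] at h1
    linarith
  exact R.mem_pos_of_coord_pos hroot hθ (hcoord ▸ hθpos)

/-- image of a positive root in `ℤΘ'` under a Weyl element positive on `Θ'` is positive -/
lemma pos_image {w : V ≃ₗᵢ[ℝ] V} (hw : w ∈ R.weyl) {X : Set V} (hX : X ⊆ R.simple)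
    (hpos : ∀ θ ∈ X, w θ ∈ R.pos) {α : V} (hα : α ∈ R.pos) (hαs : α ∈ span ℤ X) :
    w α ∈ R.pos := by
  obtain ⟨f, hsupp, hsum, hc⟩ := R.pos_repr hα
  have hsX : (f.support : Set V) ⊆ X := by
    intro β hβ
    have hβs : β ∈ R.simple := hsupp hβ
    by_contra hβX
    have h0 : R.coord β α = 0 :=
      R.coord_zero_of_span hβs hX hβX (mem_rspan_of_zspan hαs)
    rw [hc β hβs] at h0
    exact Finsupp.mem_support_iff.mp (by exact_mod_cast hβ) (by exact_mod_cast h0)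
  have hroot : w α ∈ R.roots := (R.weyl_roots hw α (R.pos_subset hα)).1
  refine R.mem_pos_of_coord_nonneg hroot (fun θ hθ => ?_)
  have hwα : w α = f.sum fun β n => (n : ℝ) • w β := by
    rw [hsum, map_finsuppSum]
    exact Finsupp.sum_congr (fun β _ => by rw [map_smul])
  rw [hwα, map_finsuppSum, Finsupp.sum]
  refine Finset.sum_nonneg (fun β hβ => ?_)
  rw [map_smul, smul_eq_mul]
  have : w β ∈ R.pos := hpos β (hsX hβ)
  exact mul_nonneg (by positivity) (R.coord_nonneg this hθ)

lemma exists_w0 (hS : S ⊆ R.simple) :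
    ∃ w₀ ∈ R.WS S, ∀ α, α ∈ R.roots → α ∈ span ℤ S → α ∈ R.pos → w₀ α ∉ R.pos := by
  classical
  set P : Set V := {α | α ∈ R.roots ∧ α ∈ (span ℤ S : Submodule ℤ V) ∧ α ∈ R.pos} with hP
  have hPfin : P.Finite := R.finite.subset (fun x hx => hx.1)
  set n : (V ≃ₗᵢ[ℝ] V) → ℕ := fun w => {β | β ∈ P ∧ w β ∉ R.pos}.ncard with hn
  set T : Set ℕ := n '' (R.WS S : Set (V ≃ₗᵢ[ℝ] V)) with hT
  have hTne : T.Nonempty := ⟨n 1, 1, (R.WS S).one_mem, rfl⟩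
  have hTbdd : BddAbove T := by
    refine ⟨P.ncard, ?_⟩
    rintro m ⟨w, hw, rfl⟩
    exact Set.ncard_le_ncard (fun x hx => hx.1) hPfin
  obtain ⟨w₀, hw₀mem, hw₀max⟩ : ∃ w₀ ∈ R.WS S, ∀ w ∈ R.WS S, n w ≤ n w₀ := by
    obtain ⟨w₀, hmem, heq⟩ := Nat.sSup_mem hTne hTbdd
    exact ⟨w₀, hmem, fun w hw => heq ▸ le_csSup hTbdd ⟨w, hw, rfl⟩⟩
  refine ⟨w₀, hw₀mem, ?_⟩
  by_contra hcon
  push_neg at hcon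
  obtain ⟨β₀, hβ₀roots, hβ₀span, hβ₀pos, hβ₀im⟩ := hcon
  -- find a simple root of S sent to a positive root by w₀
  have hstep : ∃ α ∈ S, w₀ α ∈ R.pos := by
    by_contra hno
    push_neg at hno
    have hw₀β₀ : w₀ β₀ ∈ R.pos := hβ₀im
    obtain ⟨θ, hθ, hθpos⟩ := R.exists_coord_pos hw₀β₀
    obtain ⟨f, hsupp, hsum, hc⟩ := R.pos_repr hβ₀pos
    have hsX : (f.support : Set V) ⊆ S := by
      intro β hβ
      have hβs : β ∈ R.simple := hsupp hβ
      by_contra hβX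
      have h0 : R.coord β β₀ = 0 :=
        R.coord_zero_of_span hβs hS hβX (mem_rspan_of_zspan hβ₀span)
      rw [hc β hβs] at h0
      exact Finsupp.mem_support_iff.mp (by exact_mod_cast hβ) (by exact_mod_cast h0)
    have hwβ₀ : w₀ β₀ = f.sum fun β k => (k : ℝ) • w₀ β := by
      rw [hsum, map_finsuppSum]
      exact Finsupp.sum_congr (fun β _ => by rw [map_smul])
    have hle : R.coord θ (w₀ β₀) ≤ 0 := by
      rw [hwβ₀, map_finsuppSum, Finsupp.sum]
      refine Finset.sum_nonpos (fun β hβ => ?_)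
      rw [map_smul, smul_eq_mul]
      have hβS : β ∈ S := hsX hβ
      have hβr : β ∈ R.roots := R.pos_subset (R.simple_subset (hS hβS))
      have h1 : w₀ β ∈ R.roots := (R.weyl_roots (R.WS_le_weyl hS hw₀mem) β hβr).1
      have h2 : -(w₀ β) ∈ R.pos := R.neg_mem_pos h1 (hno β hβS)
      have h3 : R.coord θ (w₀ β) ≤ 0 := by
        have := R.coord_nonneg h2 hθ
        rw [map_neg] at this
        linarith
      exact mul_nonpos_of_nonneg_of_nonpos (by positivity) h3
    linarith
  obtain ⟨α, hαS, hw₀α⟩ := hstep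
  have hαsim : α ∈ R.simple := hS hαS
  have hαpos : α ∈ R.pos := R.simple_subset hαsim
  have hαroot : α ∈ R.roots := R.pos_subset hαpos
  have hαzspan : α ∈ span ℤ S := subset_span hαS
  have hsα : rootRefl α ∈ R.WS S := Subgroup.subset_closure ⟨α, hαS, rfl⟩
  set w' : V ≃ₗᵢ[ℝ] V := w₀ * rootRefl α with hw'
  have hw'mem : w' ∈ R.WS S := mul_mem hw₀mem hsα
  -- the key step: each inversion of w₀ gives one of w', and α is a new one
  have hkey : ∀ β, β ∈ P ∧ w₀ β ∉ R.pos →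
      (rootRefl α β ∈ P ∧ w' (rootRefl α β) ∉ R.pos) ∧ rootRefl α β ≠ α := by
    rintro β ⟨⟨hβr, hβz, hβp⟩, hβneg⟩
    -- find θ ∈ simple, θ ≠ α with positive coordinate in β
    have hθex : ∃ θ ∈ R.simple, θ ≠ α ∧ 0 < R.coord θ β := by
      by_contra hnoθ
      push_neg at hnoθ
      obtain ⟨f, hsupp, hsum, hc⟩ := R.pos_repr hβp
      have hsuppα : ∀ x ∈ f.support, x = α := by
        intro x hx
        have hxs : x ∈ R.simple := hsupp hx
        by_contra hxα
        have h1 : R.coord x β = 0 := by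
          have h2 := hnoθ x hxs hxα
          have h3 := R.coord_nonneg hβp hxs
          linarith
        rw [hc x hxs] at h1
        exact Finsupp.mem_support_iff.mp hx (by exact_mod_cast h1)
      have hβα : β = (f α : ℝ) • α := by
        rw [hsum, Finsupp.sum_eq_single α (fun b hb hbα => absurd (hsuppα b
          (Finsupp.mem_support_iff.mpr hb)) hbα) (by simp)]
      -- then w₀ β is a nonnegative multiple of w₀ α, hence positive: contradiction
      have hw₀β : w₀ β = (f α : ℝ) • w₀ α := by rw [hβα, map_smul]
      have : w₀ β ∈ R.pos := by
        refine R.mem_pos_of_coord_nonneg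
          ((R.weyl_roots (R.WS_le_weyl hS hw₀mem) β hβr).1) (fun θ hθ => ?_)
        rw [hw₀β, map_smul, smul_eq_mul]
        exact mul_nonneg (by positivity) (R.coord_nonneg hw₀α hθ)
      exact hβneg this
    obtain ⟨θ, hθsim, hθα, hθpos⟩ := hθex
    have hstab := R.ws_stab hS hsα β hβr hβz
    have hsβr : rootRefl α β ∈ R.roots := hstab.1.1
    have hsβz : rootRefl α β ∈ span ℤ S := hstab.1.2
    have hcoordθ : R.coord θ (rootRefl α β) = R.coord θ β := by
      obtain ⟨c, hc⟩ := mem_span_singleton.mp (rootRefl_sub_mem α β)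
      have h1 : rootRefl α β = c • α + β := sub_eq_iff_eq_add.mp hc.symm
      rw [h1, map_add, map_smul, smul_eq_mul, R.coord_apply_basis hθsim hαsim,
        if_neg (fun h => hθα h.symm)]
      ring
    have hsβp : rootRefl α β ∈ R.pos :=
      R.mem_pos_of_coord_pos hsβr hθsim (hcoordθ ▸ hθpos)
    have hw'im : w' (rootRefl α β) = w₀ β := by
      rw [hw', LinearIsometryEquiv.coe_mul, Function.comp_apply, rootRefl_invol]
    refine ⟨⟨⟨hsβr, hsβz, hsβp⟩, by rw [hw'im]; exact hβneg⟩, ?_⟩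
    intro heq
    have : R.coord θ α = 0 := by
      rw [R.coord_apply_basis hθsim hαsim, if_neg (fun h => hθα h.symm)]
    rw [heq, this] at hcoordθ
    linarith [hcoordθ ▸ hθpos]
  -- α itself is an inversion of w'
  have hαinv : α ∈ P ∧ w' α ∉ R.pos := by
    refine ⟨⟨hαroot, hαzspan, hαpos⟩, ?_⟩
    have : w' α = -(w₀ α) := by
      rw [hw', LinearIsometryEquiv.coe_mul, Function.comp_apply, rootRefl_apply_self, map_neg]
    rw [this]
    exact R.not_neg_mem_pos hw₀α
  -- counting
  set A : Set V := {β | β ∈ P ∧ w₀ β ∉ R.pos} with hA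
  set B : Set V := {β | β ∈ P ∧ w' β ∉ R.pos} with hB
  have hAfin : A.Finite := hPfin.subset (fun x hx => hx.1)
  have hBfin : B.Finite := hPfin.subset (fun x hx => hx.1)
  have hsub : insert α ((rootRefl α) '' A) ⊆ B := by
    rintro x hx
    rcases Set.mem_insert_iff.mp hx with rfl | ⟨β, hβ, rfl⟩
    · exact hαinv
    · exact (hkey β hβ).1
  have hαnot : α ∉ (rootRefl α) '' A := by
    rintro ⟨β, hβ, hβeq⟩
    exact (hkey β hβ).2 hβeq
  have h1 : (insert α ((rootRefl α) '' A)).ncard = A.ncard + 1 := by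
    rw [Set.ncard_insert_of_notMem hαnot (hAfin.image _),
      Set.ncard_image_of_injective _ (rootRefl α).injective]
  have h2 : (insert α ((rootRefl α) '' A)).ncard ≤ B.ncard :=
    Set.ncard_le_ncard hsub hBfin
  have h3 : n w' ≤ n w₀ := hw₀max w' hw'mem
  have h4 : n w₀ = A.ncard := rfl
  have h5 : n w' = B.ncard := rfl
  omega

end RootSystemData

end Aux2

/-!
STATEMENT 1: with `Θ, S ⊆ Π`, `Σ_M⁺ = ℤΘ ∩ Σ⁺`, `W(M) = {w ∈ W : w(Σ_M⁺) ⊆ Σ⁺}`,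
`Σ_η⁺ = ℤS ∩ Σ⁺`, one has `#W(S,Θ) = #{w ∈ W(M) : w(Σ⁺) ∩ Σ_η⁺ = ∅}` where
`W(S,Θ) = {w ∈ W(S) ∩ W(Θ)⁻¹ : w(Σ_S) ∩ Σ_Θ = ∅}`, `W(Θ') = {w : w(Θ') ⊆ Σ⁺}`,
`Σ_{Θ'} = ℤΘ' ∩ Σ`.
-/
theorem stmt1 {V : Type*} [NormedAddCommGroup V] [InnerProductSpace ℝ V]
    [FiniteDimensional ℝ V] (R : RootSystemData V) (Θ S : Set V)
    (hΘ : Θ ⊆ R.simple) (hS : S ⊆ R.simple) :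
    Nat.card {w : V ≃ₗᵢ[ℝ] V //
        w ∈ R.weyl ∧ (∀ α ∈ S, w α ∈ R.pos) ∧ (∀ α ∈ Θ, w⁻¹ α ∈ R.pos) ∧
        (w '' (R.roots ∩ (Submodule.span ℤ S : Set V))) ∩
          (R.roots ∩ (Submodule.span ℤ Θ : Set V)) = ∅}
      = Nat.card {w : V ≃ₗᵢ[ℝ] V //
        w ∈ R.weyl ∧
        (∀ α ∈ (R.roots ∩ (Submodule.span ℤ Θ : Set V)) ∩ R.pos, w α ∈ R.pos) ∧
        (w '' R.pos) ∩ ((Submodule.span ℤ S : Set V) ∩ R.pos) = ∅} := by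
  classical
  obtain ⟨w₀, hw₀mem, hw₀⟩ := R.exists_w0 hS
  have hw₀weyl : w₀ ∈ R.weyl := R.WS_le_weyl hS hw₀mem
  have happly_inv : ∀ (v : V ≃ₗᵢ[ℝ] V) (x : V), v (v⁻¹ x) = x := by
    intro v x
    rw [LinearIsometryEquiv.coe_inv]
    exact v.apply_symm_apply x
  have hinv_apply : ∀ (v : V ≃ₗᵢ[ℝ] V) (x : V), v⁻¹ (v x) = x := by
    intro v x
    rw [LinearIsometryEquiv.coe_inv]
    exact v.symm_apply_apply x
  have hmul_apply : ∀ (a b : V ≃ₗᵢ[ℝ] V) (x : V), (a * b) x = a (b x) := by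
    intro a b x
    rw [LinearIsometryEquiv.coe_mul, Function.comp_apply]
  have hw₀invneg : ∀ δ, δ ∈ R.roots → δ ∈ Submodule.span ℤ S → δ ∈ R.pos →
      w₀⁻¹ δ ∉ R.pos := by
    intro δ h1 h2 h3 h4
    have hstab := (R.ws_stab hS hw₀mem δ h1 h2).2
    have := hw₀ (w₀⁻¹ δ) hstab.1 hstab.2 h4
    rw [happly_inv] at this
    exact this h3
  have key1 : ∀ w : V ≃ₗᵢ[ℝ] V,
      (w ∈ R.weyl ∧ (∀ α ∈ S, w α ∈ R.pos) ∧ (∀ α ∈ Θ, w⁻¹ α ∈ R.pos) ∧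
        (w '' (R.roots ∩ (Submodule.span ℤ S : Set V))) ∩
          (R.roots ∩ (Submodule.span ℤ Θ : Set V)) = ∅) →
      ((w₀ * w⁻¹) ∈ R.weyl ∧
        (∀ α ∈ (R.roots ∩ (Submodule.span ℤ Θ : Set V)) ∩ R.pos, (w₀ * w⁻¹) α ∈ R.pos) ∧
        ((w₀ * w⁻¹) '' R.pos) ∩ ((Submodule.span ℤ S : Set V) ∩ R.pos) = ∅) := by
    rintro w ⟨hw, h2, h3, h4⟩
    refine ⟨mul_mem hw₀weyl (inv_mem hw), ?_, ?_⟩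
    · rintro α ⟨⟨hαr, hαzΘ⟩, hαp⟩
      have hαzΘ' : α ∈ Submodule.span ℤ Θ := hαzΘ
      have hwinv : w⁻¹ α ∈ R.pos := R.pos_image (inv_mem hw) hΘ h3 hαp hαzΘ'
      have hwr : w⁻¹ α ∈ R.roots := (R.weyl_roots hw α hαr).2
      have hnot : w⁻¹ α ∉ Submodule.span ℤ S := by
        intro hmem
        refine Set.eq_empty_iff_forall_notMem.mp h4 α
          ⟨⟨w⁻¹ α, ⟨hwr, hmem⟩, happly_inv w α⟩, hαr, hαzΘ⟩
      rw [hmul_apply]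
      exact R.ws_pos_out hS hw₀mem hwinv hnot
    · rw [Set.eq_empty_iff_forall_notMem]
      rintro x ⟨⟨β, hβ, rfl⟩, hxS, hxp⟩
      have hxS' : (w₀ * w⁻¹) β ∈ Submodule.span ℤ S := hxS
      have hβr : β ∈ R.roots := R.pos_subset hβ
      have hxr : (w₀ * w⁻¹) β ∈ R.roots :=
        (R.weyl_roots (mul_mem hw₀weyl (inv_mem hw)) β hβr).1
      have hinvnp := hw₀invneg _ hxr hxS' hxp
      have hstab := (R.ws_stab hS hw₀mem _ hxr hxS').2
      have heq : w₀⁻¹ ((w₀ * w⁻¹) β) = w⁻¹ β := by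
        rw [hmul_apply, hinv_apply]
      rw [heq] at hinvnp hstab
      have hγp : -(w⁻¹ β) ∈ R.pos := R.neg_mem_pos hstab.1 hinvnp
      have hγz : -(w⁻¹ β) ∈ Submodule.span ℤ S := Submodule.neg_mem _ hstab.2
      have hwγ : w (-(w⁻¹ β)) ∈ R.pos := R.pos_image hw hS h2 hγp hγz
      rw [map_neg, happly_inv] at hwγ
      exact R.not_neg_mem_pos hβ hwγ
  have key2 : ∀ u : V ≃ₗᵢ[ℝ] V,
      (u ∈ R.weyl ∧
        (∀ α ∈ (R.roots ∩ (Submodule.span ℤ Θ : Set V)) ∩ R.pos, u α ∈ R.pos) ∧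
        (u '' R.pos) ∩ ((Submodule.span ℤ S : Set V) ∩ R.pos) = ∅) →
      ((u⁻¹ * w₀) ∈ R.weyl ∧ (∀ α ∈ S, (u⁻¹ * w₀) α ∈ R.pos) ∧
        (∀ α ∈ Θ, (u⁻¹ * w₀)⁻¹ α ∈ R.pos) ∧
        ((u⁻¹ * w₀) '' (R.roots ∩ (Submodule.span ℤ S : Set V))) ∩
          (R.roots ∩ (Submodule.span ℤ Θ : Set V)) = ∅) := by
    rintro u ⟨hu, hA, hB⟩
    have hBx : ∀ x ∈ R.pos, u x ∈ Submodule.span ℤ S → u x ∈ R.pos → False := by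
      intro x hx h1 h2
      exact Set.eq_empty_iff_forall_notMem.mp hB (u x) ⟨⟨x, hx, rfl⟩, h1, h2⟩
    refine ⟨mul_mem (inv_mem hu) hw₀weyl, ?_, ?_, ?_⟩
    · intro α hαS
      have hαsim : α ∈ R.simple := hS hαS
      have hαpos : α ∈ R.pos := R.simple_subset hαsim
      have hαroot : α ∈ R.roots := R.pos_subset hαpos
      have hαz : α ∈ Submodule.span ℤ S := Submodule.subset_span hαS
      have hstab := (R.ws_stab hS hw₀mem α hαroot hαz).1
      have hynp : w₀ α ∉ R.pos := hw₀ α hαroot hαz hαpos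
      have hδp : -(w₀ α) ∈ R.pos := R.neg_mem_pos hstab.1 hynp
      have hδz : -(w₀ α) ∈ Submodule.span ℤ S := Submodule.neg_mem _ hstab.2
      have hδr : -(w₀ α) ∈ R.roots := R.neg_mem_roots hstab.1
      have hunp : u⁻¹ (-(w₀ α)) ∉ R.pos := by
        intro hp
        exact hBx _ hp (by rw [happly_inv]; exact hδz) (by rw [happly_inv]; exact hδp)
      have hur : u⁻¹ (-(w₀ α)) ∈ R.roots := (R.weyl_roots hu _ hδr).2
      have : -(u⁻¹ (-(w₀ α))) ∈ R.pos := R.neg_mem_pos hur hunp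
      rw [map_neg, neg_neg] at this
      rw [hmul_apply]
      exact this
    · intro α hαΘ
      have hαsim : α ∈ R.simple := hΘ hαΘ
      have hαpos : α ∈ R.pos := R.simple_subset hαsim
      have hαroot : α ∈ R.roots := R.pos_subset hαpos
      have hαz : α ∈ Submodule.span ℤ Θ := Submodule.subset_span hαΘ
      have huα : u α ∈ R.pos := hA α ⟨⟨hαroot, hαz⟩, hαpos⟩
      have huαnS : u α ∉ Submodule.span ℤ S := fun hmem => hBx α hαpos hmem huα
      have heq : (u⁻¹ * w₀)⁻¹ α = w₀⁻¹ (u α) := by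
        rw [mul_inv_rev, inv_inv, hmul_apply]
      rw [heq]
      exact R.ws_pos_out hS (inv_mem hw₀mem) huα huαnS
    · rw [Set.eq_empty_iff_forall_notMem]
      rintro x ⟨⟨β, ⟨hβr, hβzS⟩, rfl⟩, hxr, hxzΘ⟩
      have hβzS' : β ∈ Submodule.span ℤ S := hβzS
      have hystab := (R.ws_stab hS hw₀mem β hβr hβzS').1
      have hzeq : (u⁻¹ * w₀) β = u⁻¹ (w₀ β) := hmul_apply _ _ _
      have huz : u ((u⁻¹ * w₀) β) = w₀ β := by rw [hzeq, happly_inv]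
      have hxzΘ' : (u⁻¹ * w₀) β ∈ Submodule.span ℤ Θ := hxzΘ
      by_cases hy : w₀ β ∈ R.pos
      · by_cases hz : (u⁻¹ * w₀) β ∈ R.pos
        · exact hBx _ hz (by rw [huz]; exact hystab.2) (by rw [huz]; exact hy)
        · have hznr : -((u⁻¹ * w₀) β) ∈ R.pos := R.neg_mem_pos hxr hz
          have h1 : u (-((u⁻¹ * w₀) β)) ∈ R.pos := by
            refine hA _ ⟨⟨R.neg_mem_roots hxr, Submodule.neg_mem _ hxzΘ'⟩, hznr⟩
          rw [map_neg, huz] at h1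
          exact R.not_neg_mem_pos hy h1
      · have hyn : -(w₀ β) ∈ R.pos := R.neg_mem_pos hystab.1 hy
        by_cases hz : (u⁻¹ * w₀) β ∈ R.pos
        · have h1 : u ((u⁻¹ * w₀) β) ∈ R.pos := hA _ ⟨⟨hxr, hxzΘ'⟩, hz⟩
          rw [huz] at h1
          exact hy h1
        · have hznr : -((u⁻¹ * w₀) β) ∈ R.pos := R.neg_mem_pos hxr hz
          refine hBx _ hznr ?_ ?_
          · rw [map_neg, huz]
            exact Submodule.neg_mem _ hystab.2
          · rw [map_neg, huz]
            exact hyn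
  exact Nat.card_congr
    { toFun := fun p => ⟨w₀ * p.1⁻¹, key1 p.1 p.2⟩
      invFun := fun p => ⟨p.1⁻¹ * w₀, key2 p.1 p.2⟩
      left_inv := fun p => Subtype.ext (by group)
      right_inv := fun p => Subtype.ext (by group) }
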